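/- arXiv:2310.01540 — 4 statements merged into one kernel-verified Lean document; each statement's English description precedes it below -/
import Mathlib

section
/- The classical value of the Magic Square game is exactly 8/9: the maximum over all deterministic strategies (a: {0,1,2} → {0,1}^3 for Alice, b: {0,1,2} → {0,1}^3 for Bob, where Alice's outputs always have even parity and Bob's outputs always have odd parity) of the probability, over uniformly random inputs (x,y) ∈ {0,1,2} × {0,1,2}, that a(x)[y] = b(y)[x], equals 8/9. -/
/-- The classical value of the Magic Square game is exactly `8/9`:
the set of winning probabilities (over uniform inputs in `{0,1,2} × {0,1,2}`) achievable by
deterministic strategies `a, b : Fin 3 → (Fin 3 → ZMod 2)` satisfying the parity constraints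
(Alice's outputs have even parity, Bob's outputs have odd parity) has greatest element `8/9`. -/
theorem magic_square_classical_value :
    IsGreatest
      {v : ℚ | ∃ a b : Fin 3 → Fin 3 → ZMod 2,
        (∀ x, a x 0 + a x 1 + a x 2 = 0) ∧
        (∀ y, b y 0 + b y 1 + b y 2 = 1) ∧
        v = ((Finset.univ.filter
              (fun p : Fin 3 × Fin 3 => a p.1 p.2 = b p.2 p.1)).card : ℚ) / 9}
      (8 / 9) := by
  constructor
  · -- membership: exhibit a strategy winning 8 of 9
    refine ⟨fun x y => if x = 2 ∧ y ≠ 2 then 1 else 0,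
            fun y x => if x = 2 then 1 else 0, ?_, ?_, ?_⟩
    · decide
    · decide
    · norm_num
      have h8 : (Finset.filter (fun p : Fin 3 × Fin 3 =>
          (if p.1 = 2 ∧ ¬p.2 = 2 then (1 : ZMod 2) else 0) = if p.1 = 2 then 1 else 0)
          Finset.univ).card = 8 := by decide
      rw [h8]; norm_num
  · -- upper bound
    rintro v ⟨a, b, ha, hb, rfl⟩
    have hcard : (Finset.univ.filter
        (fun p : Fin 3 × Fin 3 => a p.1 p.2 = b p.2 p.1)).card ≤ 8 := by
      by_contra hc
      push_neg at hc
      have h9 : (Finset.univ.filter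
          (fun p : Fin 3 × Fin 3 => a p.1 p.2 = b p.2 p.1)).card = 9 := by
        have hle := Finset.card_filter_le (Finset.univ : Finset (Fin 3 × Fin 3))
          (fun p : Fin 3 × Fin 3 => a p.1 p.2 = b p.2 p.1)
        simp only [Finset.card_univ, Fintype.card_prod, Fintype.card_fin] at hle
        omega
      have huniv : (Finset.univ.filter
          (fun p : Fin 3 × Fin 3 => a p.1 p.2 = b p.2 p.1)) = Finset.univ := by
        apply Finset.eq_univ_of_card
        simpa using h9
      have hall : ∀ x y : Fin 3, a x y = b y x := by
        intro x y
        have := huniv ▸ Finset.mem_univ (x, y)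
        exact (Finset.mem_filter.mp this).2
      have h01 : (0 : ZMod 2) = 1 := by
        calc (0 : ZMod 2)
            = (a 0 0 + a 0 1 + a 0 2) + (a 1 0 + a 1 1 + a 1 2)
              + (a 2 0 + a 2 1 + a 2 2) := by rw [ha 0, ha 1, ha 2]; ring
          _ = (b 0 0 + b 0 1 + b 0 2) + (b 1 0 + b 1 1 + b 1 2)
              + (b 2 0 + b 2 1 + b 2 2) := by
                simp only [hall]; ring
          _ = 1 := by rw [hb 0, hb 1, hb 2]; decide
      exact absurd h01 (by decide)
    have : ((Finset.univ.filter
        (fun p : Fin 3 × Fin 3 => a p.1 p.2 = b p.2 p.1)).card : ℚ) ≤ 8 := by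
      exact_mod_cast hcard
    linarith
end

section
/- For every deterministic strategy in the Magic Square game satisfying the parity constraints (Alice's three output bits XOR to 0, Bob's three output bits XOR to 1), there exists at least one input pair (x,y) ∈ {0,1,2}² on which the strategy loses, i.e., a(x)[y] ≠ b(y)[x]. -/
/-- Every deterministic strategy for the Magic Square game satisfying the parity constraints
loses on at least one input pair: there exist `x, y` with `a x y ≠ b y x`. -/
theorem magic_square_no_perfect_strategy
    (a b : Fin 3 → Fin 3 → ZMod 2)
    (ha : ∀ x, a x 0 + a x 1 + a x 2 = 0)
    (hb : ∀ y, b y 0 + b y 1 + b y 2 = 1) :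
    ∃ x y : Fin 3, a x y ≠ b y x := by
  by_contra h
  push_neg at h
  have h1 := ha 0; have h2 := ha 1; have h3 := ha 2
  rw [h 0 0, h 0 1, h 0 2] at h1
  rw [h 1 0, h 1 1, h 1 2] at h2
  rw [h 2 0, h 2 1, h 2 2] at h3
  have : (0 : ZMod 2) = 1 := by
    have h4 : (2 : ZMod 2) = 0 := by decide
    linear_combination h1 + h2 + h3 - hb 0 - hb 1 - hb 2 - 2 * h4
  exact absurd this (by decide)
end

section
/- No deterministic strategy for the Magic Square game can win on all 9 input pairs, because filling a 3×3 binary matrix whose entry (x,y) equals both a(x)[y] and b(y)[x] would require every row to have even parity and every column to have odd parity, forcing the total parity of all 9 entries to be both 0 and 1 — a contradiction. -/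
/-- There is no 3×3 matrix over `ZMod 2` in which every row has even parity and every
column has odd parity. (This is the parity obstruction behind the Magic Square game.) -/
theorem no_magic_square_matrix :
    ¬ ∃ M : Fin 3 → Fin 3 → ZMod 2,
        (∀ x, ∑ y, M x y = 0) ∧ (∀ y, ∑ x, M x y = 1) := by
  rintro ⟨M, hr, hc⟩
  have h1 : ∑ x : Fin 3, ∑ y : Fin 3, M x y = 0 := by
    simp [hr]
  have h2 : ∑ x : Fin 3, ∑ y : Fin 3, M x y = 1 := by
    rw [Finset.sum_comm]
    simp [hc]
    decide
  rw [h1] at h2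
  exact absurd h2 (by decide)
end

section
/- In a 1D geometrically-local circuit of Toffoli gates on a line input of size n with the horizontal-cut partition, at most one gate in each layer receives input wires from both sides of the cut (i.e., from both U_i and D_i). Consequently, a depth-d such circuit can be simulated by a two-party communication protocol (Alice holding the x-inputs, Bob holding the y-inputs, with shared randomness equal to the circuit's auxiliary random bits) using O(d) bits of communication in total. -/
/-! A model of 1D geometrically-local circuits of (Toffoli-type) fan-in-3 gates acting on
contiguous wires on a line, together with two-party communication protocols, and the
statement: each layer has at most one gate straddling the horizontal cut, and consequently a
depth-`d` circuit can be simulated with `O(d)` bits of communication. -/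

/-- A gate acting on the three contiguous wires `pos`, `pos+1`, `pos+2`. -/
structure Gate where
  pos : ℕ
  fn : (ZMod 2 × ZMod 2 × ZMod 2) → (ZMod 2 × ZMod 2 × ZMod 2)

/-- The wires on which a gate acts. -/
def Gate.support (g : Gate) : Finset ℕ := {g.pos, g.pos + 1, g.pos + 2}

/-- Apply a gate to a state of the wires. -/
def applyGate (g : Gate) (s : ℕ → ZMod 2) : ℕ → ZMod 2 := fun i =>
  if i = g.pos then (g.fn (s g.pos, s (g.pos + 1), s (g.pos + 2))).1
  else if i = g.pos + 1 then (g.fn (s g.pos, s (g.pos + 1), s (g.pos + 2))).2.1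
  else if i = g.pos + 2 then (g.fn (s g.pos, s (g.pos + 1), s (g.pos + 2))).2.2
  else s i

/-- A layer of a circuit: a list of gates. -/
abbrev Layer := List Gate

def applyLayer (L : Layer) (s : ℕ → ZMod 2) : ℕ → ZMod 2 :=
  L.foldl (fun t g => applyGate g t) s

/-- Evaluate a circuit (a list of layers) on an initial state. -/
def evalCircuit (C : List Layer) (s : ℕ → ZMod 2) : ℕ → ZMod 2 :=
  C.foldl (fun t L => applyLayer L t) s

/-- A valid layer: the gates act on pairwise disjoint sets of wires. -/
def ValidLayer (L : Layer) : Prop :=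
  L.Pairwise (fun g h => Disjoint g.support h.support)

/-- A gate straddles the horizontal cut at wire `W` iff it touches wires on both sides. -/
def Straddles (W : ℕ) (g : Gate) : Prop := g.pos < W ∧ W ≤ g.pos + 2

instance (W : ℕ) : DecidablePred (Straddles W) := fun _ => instDecidableAnd

/-- Initial state on the line: Alice's `n` input bits `x` occupy wires `0..n-1`, Bob's `n`
input bits `y` occupy wires `W..W+n-1`; all remaining wires hold the (input-independent,
geometrically non-local) shared randomness `r`. Alice holds wires `< W`, Bob wires `≥ W`. -/
def initState (n W : ℕ) (x y r : ℕ → ZMod 2) : ℕ → ZMod 2 := fun i =>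
  if i < n then x i else if W ≤ i ∧ i < W + n then y (i - W) else r i

/-- A two-party communication protocol with shared randomness: in each round the designated
speaker sends one bit, computed from their own input, the shared randomness, and the
transcript so far; at the end each party produces its output from its input, the randomness
and the full transcript. -/
structure Protocol where
  rounds : ℕ
  speaker : ℕ → Bool
  nextA : (ℕ → ZMod 2) → (ℕ → ZMod 2) → List Bool → Bool
  nextB : (ℕ → ZMod 2) → (ℕ → ZMod 2) → List Bool → Bool
  outA : (ℕ → ZMod 2) → (ℕ → ZMod 2) → List Bool → (ℕ → ZMod 2)
  outB : (ℕ → ZMod 2) → (ℕ → ZMod 2) → List Bool → (ℕ → ZMod 2)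

/-- The transcript of the first `k` rounds of a protocol. -/
def transcript (P : Protocol) (x y r : ℕ → ZMod 2) : ℕ → List Bool
  | 0 => []
  | k + 1 =>
      let t := transcript P x y r k
      t ++ [if P.speaker k then P.nextA x r t else P.nextB y r t]

/-! ### Auxiliary definitions -/

def b2z (b : Bool) : ZMod 2 := if b then 1 else 0
def z2b (v : ZMod 2) : Bool := decide (v = 1)

lemma b2z_z2b (v : ZMod 2) : b2z (z2b v) = v := by revert v; decide

def patchA (W : ℕ) (a b : Bool) (s : ℕ → ZMod 2) : ℕ → ZMod 2 := fun i =>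
  if W ≤ i then (if i = W then b2z a else if i = W + 1 then b2z b else s i) else s i

def patchB (W : ℕ) (a b : Bool) (s : ℕ → ZMod 2) : ℕ → ZMod 2 := fun i =>
  if i < W then (if i + 2 = W then b2z a else if i + 1 = W then b2z b else s i) else s i

def aSt (W : ℕ) : List Layer → List Bool → (ℕ → ZMod 2) → (ℕ → ZMod 2)
  | [], _, s => s
  | L :: rest, t, s =>
      aSt W rest (t.drop 4) (applyLayer L (patchA W (t.getD 2 false) (t.getD 3 false) s))

def bSt (W : ℕ) : List Layer → List Bool → (ℕ → ZMod 2) → (ℕ → ZMod 2)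
  | [], _, s => s
  | L :: rest, t, s =>
      bSt W rest (t.drop 4) (applyLayer L (patchB W (t.getD 0 false) (t.getD 1 false) s))

def initA (n : ℕ) (x r : ℕ → ZMod 2) : ℕ → ZMod 2 := fun i => if i < n then x i else r i

def initB (n W : ℕ) (y r : ℕ → ZMod 2) : ℕ → ZMod 2 := fun i =>
  if W ≤ i ∧ i < W + n then y (i - W) else r i

def theProtocol (n W : ℕ) (circ : List Layer) : Protocol where
  rounds := 4 * circ.length
  speaker := fun m => decide (m % 4 < 2)
  nextA := fun x r t =>
    z2b (aSt W (circ.take (t.length / 4)) t (initA n x r) (W + t.length % 4 - 2))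
  nextB := fun y r t =>
    z2b (bSt W (circ.take (t.length / 4)) t (initB n W y r) (W + t.length % 4 - 2))
  outA := fun x r t => aSt W circ t (initA n x r)
  outB := fun y r t => bSt W circ t (initB n W y r)

/-! ### Basic lemmas -/

lemma applyGate_out (g : Gate) (s : ℕ → ZMod 2) {j : ℕ} (hj : j ∉ g.support) :
    applyGate g s j = s j := by
  simp only [Gate.support, Finset.mem_insert, Finset.mem_singleton, not_or] at hj
  simp [applyGate, hj.1, hj.2.1, hj.2.2]

lemma applyGate_congr (g : Gate) {s s' : ℕ → ZMod 2}
    (h1 : s g.pos = s' g.pos) (h2 : s (g.pos + 1) = s' (g.pos + 1))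
    (h3 : s (g.pos + 2) = s' (g.pos + 2)) (j : ℕ) (hj : s j = s' j) :
    applyGate g s j = applyGate g s' j := by
  simp only [applyGate, h1, h2, h3, hj]

lemma mem_support_iff {g : Gate} {j : ℕ} :
    j ∈ g.support ↔ j = g.pos ∨ j = g.pos + 1 ∨ j = g.pos + 2 := by
  simp [Gate.support]

lemma mem_support_of_straddles {W : ℕ} {g : Gate} (h : Straddles W g) : W ∈ g.support := by
  obtain ⟨h1, h2⟩ := h
  rw [mem_support_iff]; omega

/-! ### At most one straddling gate per layer -/

lemma one_straddler (W : ℕ) (L : Layer) (hL : ValidLayer L) :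
    (L.filter (fun g => decide (Straddles W g))).length ≤ 1 := by
  rcases hF : L.filter (fun g => decide (Straddles W g)) with _ | ⟨a, _ | ⟨b, rest⟩⟩
  · simp
  · simp
  · exfalso
    have hpw := hL.filter (fun g => decide (Straddles W g))
    rw [hF] at hpw
    have hdisj : Disjoint a.support b.support :=
      (List.pairwise_cons.mp hpw).1 b (by simp)
    have ha : Straddles W a := by
      have : a ∈ L.filter (fun g => decide (Straddles W g)) := by rw [hF]; simp
      simpa using (List.mem_filter.mp this).2
    have hb : Straddles W b := by
      have : b ∈ L.filter (fun g => decide (Straddles W g)) := by rw [hF]; simp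
      simpa using (List.mem_filter.mp this).2
    exact (Finset.disjoint_left.mp hdisj (mem_support_of_straddles ha))
      (mem_support_of_straddles hb)

/-! ### Layer simulation lemmas -/

lemma applyLayer_cons (g : Gate) (L : Layer) (s : ℕ → ZMod 2) :
    applyLayer (g :: L) s = applyLayer L (applyGate g s) := rfl

lemma layerA (W : ℕ) : ∀ (L : Layer), ValidLayer L → ∀ (s s' : ℕ → ZMod 2),
    (∀ j < W, s j = s' j) →
    (∀ g ∈ L, Straddles W g → ∀ j ∈ g.support, s j = s' j) →
    ∀ j < W, applyLayer L s j = applyLayer L s' j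
  | [], _, s, s', hlt, _, j, hj => hlt j hj
  | g :: L', hval, s, s', hlt, hstr, j, hj => by
    rw [applyLayer_cons, applyLayer_cons]
    obtain ⟨hdisj, hval'⟩ := List.pairwise_cons.mp hval
    have hin : s g.pos = s' g.pos ∧ s (g.pos + 1) = s' (g.pos + 1)
        ∧ s (g.pos + 2) = s' (g.pos + 2) ∨
        (∀ j < W, applyGate g s j = applyGate g s' j) := by
      by_cases hstrg : Straddles W g
      · left
        have h := hstr g (by simp) hstrg
        exact ⟨h _ (by rw [mem_support_iff]; tauto), h _ (by rw [mem_support_iff]; tauto),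
          h _ (by rw [mem_support_iff]; tauto)⟩
      · right
        intro j hj
        by_cases hmem : j ∈ g.support
        · -- then support entirely below W
          have hp : g.pos ≤ j := by rw [mem_support_iff] at hmem; omega
          have hlow : g.pos + 2 < W := by
            simp only [Straddles, not_and, not_le] at hstrg
            omega
          exact applyGate_congr g (hlt _ (by omega)) (hlt _ (by omega)) (hlt _ (by omega))
            j (hlt j hj)
        · rw [applyGate_out g s hmem, applyGate_out g s' hmem]
          exact hlt j hj
    refine layerA W L' hval' (applyGate g s) (applyGate g s') ?_ ?_ j hj
    · intro j hj
      rcases hin with ⟨h1, h2, h3⟩ | h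
      · exact applyGate_congr g h1 h2 h3 j (hlt j hj)
      · exact h j hj
    · intro h hmemL hstr' j hjsup
      have hjg : j ∉ g.support :=
        Finset.disjoint_right.mp (hdisj h hmemL) hjsup
      rw [applyGate_out g s hjg, applyGate_out g s' hjg]
      exact hstr h (by simp [hmemL]) hstr' j hjsup

lemma layerB (W : ℕ) : ∀ (L : Layer), ValidLayer L → ∀ (s s' : ℕ → ZMod 2),
    (∀ j, W ≤ j → s j = s' j) →
    (∀ g ∈ L, Straddles W g → ∀ j ∈ g.support, s j = s' j) →
    ∀ j, W ≤ j → applyLayer L s j = applyLayer L s' j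
  | [], _, s, s', hge, _, j, hj => hge j hj
  | g :: L', hval, s, s', hge, hstr, j, hj => by
    rw [applyLayer_cons, applyLayer_cons]
    obtain ⟨hdisj, hval'⟩ := List.pairwise_cons.mp hval
    have hin : s g.pos = s' g.pos ∧ s (g.pos + 1) = s' (g.pos + 1)
        ∧ s (g.pos + 2) = s' (g.pos + 2) ∨
        (∀ j, W ≤ j → applyGate g s j = applyGate g s' j) := by
      by_cases hstrg : Straddles W g
      · left
        have h := hstr g (by simp) hstrg
        exact ⟨h _ (by rw [mem_support_iff]; tauto), h _ (by rw [mem_support_iff]; tauto),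
          h _ (by rw [mem_support_iff]; tauto)⟩
      · right
        intro j hj
        by_cases hmem : j ∈ g.support
        · have hp : j ≤ g.pos + 2 := by rw [mem_support_iff] at hmem; omega
          have hhigh : W ≤ g.pos := by
            simp only [Straddles, not_and, not_le] at hstrg
            omega
          exact applyGate_congr g (hge _ (by omega)) (hge _ (by omega)) (hge _ (by omega))
            j (hge j hj)
        · rw [applyGate_out g s hmem, applyGate_out g s' hmem]
          exact hge j hj
    refine layerB W L' hval' (applyGate g s) (applyGate g s') ?_ ?_ j hj
    · intro j hj
      rcases hin with ⟨h1, h2, h3⟩ | h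
      · exact applyGate_congr g h1 h2 h3 j (hge j hj)
      · exact h j hj
    · intro h hmemL hstr' j hjsup
      have hjg : j ∉ g.support :=
        Finset.disjoint_right.mp (hdisj h hmemL) hjsup
      rw [applyGate_out g s hjg, applyGate_out g s' hjg]
      exact hstr h (by simp [hmemL]) hstr' j hjsup

/-! ### simState structural lemmas -/

lemma aSt_append (W : ℕ) : ∀ (L₁ L₂ : List Layer) (t : List Bool) (s : ℕ → ZMod 2),
    aSt W (L₁ ++ L₂) t s = aSt W L₂ (t.drop (4 * L₁.length)) (aSt W L₁ t s)
  | [], L₂, t, s => by simp [aSt]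
  | L :: L₁', L₂, t, s => by
    have h1 : aSt W ((L :: L₁') ++ L₂) t s = aSt W (L₁' ++ L₂) (t.drop 4)
        (applyLayer L (patchA W (t.getD 2 false) (t.getD 3 false) s)) := rfl
    have h2 : aSt W (L :: L₁') t s = aSt W L₁' (t.drop 4)
        (applyLayer L (patchA W (t.getD 2 false) (t.getD 3 false) s)) := rfl
    rw [h1, aSt_append W L₁' L₂, List.drop_drop, h2, List.length_cons]
    ring_nf

lemma bSt_append (W : ℕ) : ∀ (L₁ L₂ : List Layer) (t : List Bool) (s : ℕ → ZMod 2),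
    bSt W (L₁ ++ L₂) t s = bSt W L₂ (t.drop (4 * L₁.length)) (bSt W L₁ t s)
  | [], L₂, t, s => by simp [bSt]
  | L :: L₁', L₂, t, s => by
    have h1 : bSt W ((L :: L₁') ++ L₂) t s = bSt W (L₁' ++ L₂) (t.drop 4)
        (applyLayer L (patchB W (t.getD 0 false) (t.getD 1 false) s)) := rfl
    have h2 : bSt W (L :: L₁') t s = bSt W L₁' (t.drop 4)
        (applyLayer L (patchB W (t.getD 0 false) (t.getD 1 false) s)) := rfl
    rw [h1, bSt_append W L₁' L₂, List.drop_drop, h2, List.length_cons]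
    ring_nf

lemma aSt_stable (W : ℕ) : ∀ (L : List Layer) (t u : List Bool) (s : ℕ → ZMod 2),
    4 * L.length ≤ t.length → aSt W L (t ++ u) s = aSt W L t s
  | [], t, u, s, _ => rfl
  | L :: L', t, u, s, h => by
    have h4 : 4 ≤ t.length := by simp [List.length_cons] at h; omega
    show aSt W L' ((t ++ u).drop 4) _ = aSt W L' (t.drop 4) _
    rw [List.drop_append_of_le_length h4,
      List.getD_append _ _ _ _ (by omega), List.getD_append _ _ _ _ (by omega)]
    exact aSt_stable W L' (t.drop 4) u _ (by simp [List.length_cons] at h ⊢; omega)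

lemma bSt_stable (W : ℕ) : ∀ (L : List Layer) (t u : List Bool) (s : ℕ → ZMod 2),
    4 * L.length ≤ t.length → bSt W L (t ++ u) s = bSt W L t s
  | [], t, u, s, _ => rfl
  | L :: L', t, u, s, h => by
    have h4 : 4 ≤ t.length := by simp [List.length_cons] at h; omega
    show bSt W L' ((t ++ u).drop 4) _ = bSt W L' (t.drop 4) _
    rw [List.drop_append_of_le_length h4,
      List.getD_append _ _ _ _ (by omega), List.getD_append _ _ _ _ (by omega)]
    exact bSt_stable W L' (t.drop 4) u _ (by simp [List.length_cons] at h ⊢; omega)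

lemma transcript_length (P : Protocol) (x y r : ℕ → ZMod 2) :
    ∀ k, (transcript P x y r k).length = k
  | 0 => rfl
  | k + 1 => by
    simp [transcript, transcript_length P x y r k]

lemma transcript_succ (P : Protocol) (x y r : ℕ → ZMod 2) (m : ℕ) :
    transcript P x y r (m + 1) = transcript P x y r m ++
      [if P.speaker m then P.nextA x r (transcript P x y r m)
        else P.nextB y r (transcript P x y r m)] := rfl

lemma evalCircuit_concat (l : List Layer) (L : Layer) (s : ℕ → ZMod 2) :
    evalCircuit (l ++ [L]) s = applyLayer L (evalCircuit l s) := by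
  simp [evalCircuit, List.foldl_append]

lemma aSt_singleton (W : ℕ) (L : Layer) (t : List Bool) (s : ℕ → ZMod 2) :
    aSt W [L] t s = applyLayer L (patchA W (t.getD 2 false) (t.getD 3 false) s) := rfl

lemma bSt_singleton (W : ℕ) (L : Layer) (t : List Bool) (s : ℕ → ZMod 2) :
    bSt W [L] t s = applyLayer L (patchB W (t.getD 0 false) (t.getD 1 false) s) := rfl

lemma main_inv (n W : ℕ) (circ : List Layer) (hvalid : ∀ L ∈ circ, ValidLayer L)
    (hnW : n ≤ W) (x y r : ℕ → ZMod 2) :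
    ∀ k, k ≤ circ.length →
      (∀ i < W, aSt W (circ.take k) (transcript (theProtocol n W circ) x y r (4 * k))
          (initA n x r) i = evalCircuit (circ.take k) (initState n W x y r) i)
      ∧ (∀ i, W ≤ i → bSt W (circ.take k) (transcript (theProtocol n W circ) x y r (4 * k))
          (initB n W y r) i = evalCircuit (circ.take k) (initState n W x y r) i)
  | 0, _ => by
    constructor
    · intro i hi
      show initA n x r i = initState n W x y r i
      unfold initA initState
      by_cases h : i < n
      · simp [h]
      · rw [if_neg h, if_neg h, if_neg (by omega)]
    · intro i hi
      show initB n W y r i = initState n W x y r i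
      unfold initB initState
      rw [if_neg (by omega : ¬ i < n)]
  | k + 1, hk => by
    have hklt : k < circ.length := by omega
    obtain ⟨IHa, IHb⟩ := main_inv n W circ hvalid hnW x y r k (by omega)
    set P := theProtocol n W circ with hP
    set t := transcript P x y r (4 * k) with ht
    have htlen : t.length = 4 * k := transcript_length P x y r (4 * k)
    set sA := initA n x r with hsA
    set sB := initB n W y r with hsB
    set Sk := evalCircuit (circ.take k) (initState n W x y r) with hSk
    set g := circ[k] with hg
    have hgval : ValidLayer g := hvalid _ (List.getElem_mem hklt)
    have htakelen : (circ.take k).length = k := by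
      rw [List.length_take]; omega
    -- the four communicated bits
    set a0 := P.nextA x r t with ha0
    set a1 := P.nextA x r (t ++ [a0]) with ha1
    set b0 := P.nextB y r (t ++ [a0, a1]) with hb0
    set b1 := P.nextB y r (t ++ [a0, a1, b0]) with hb1
    have hs0 : P.speaker (4 * k) = true := by
      simp only [hP, theProtocol, decide_eq_true_eq]; omega
    have hs1 : P.speaker (4 * k + 1) = true := by
      simp only [hP, theProtocol, decide_eq_true_eq]; omega
    have hs2 : P.speaker (4 * k + 2) = false := by
      simp only [hP, theProtocol, decide_eq_false_iff_not]; omega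
    have hs3 : P.speaker (4 * k + 3) = false := by
      simp only [hP, theProtocol, decide_eq_false_iff_not]; omega
    have hT1 : transcript P x y r (4 * k + 1) = t ++ [a0] := by
      rw [transcript_succ, ← ht, hs0, if_pos rfl, ← ha0]
    have hT2 : transcript P x y r (4 * k + 2) = t ++ [a0, a1] := by
      rw [show 4 * k + 2 = 4 * k + 1 + 1 by ring, transcript_succ, hT1, hs1, if_pos rfl, ← ha1]
      simp
    have hT3 : transcript P x y r (4 * k + 3) = t ++ [a0, a1, b0] := by
      rw [show 4 * k + 3 = 4 * k + 2 + 1 by ring, transcript_succ, hT2, hs2,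
        if_neg (by simp), ← hb0]
      simp
    have hT : transcript P x y r (4 * (k + 1)) = t ++ [a0, a1, b0, b1] := by
      rw [show 4 * (k + 1) = 4 * k + 3 + 1 by ring, transcript_succ, hT3, hs3,
        if_neg (by simp), ← hb1]
      simp
    -- values of the bits
    have hstab : ∀ u : List Bool, ∀ s : ℕ → ZMod 2,
        aSt W (circ.take k) (t ++ u) s = aSt W (circ.take k) t s := by
      intro u s; exact aSt_stable W _ t u s (le_of_eq (by rw [htakelen, htlen]))
    have hstabB : ∀ u : List Bool, ∀ s : ℕ → ZMod 2,
        bSt W (circ.take k) (t ++ u) s = bSt W (circ.take k) t s := by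
      intro u s; exact bSt_stable W _ t u s (le_of_eq (by rw [htakelen, htlen]))
    have hA0 : a0 = z2b (aSt W (circ.take k) t sA (W - 2)) := by
      rw [ha0]
      show z2b (aSt W (circ.take (t.length / 4)) t sA (W + t.length % 4 - 2)) = _
      rw [htlen, show 4 * k / 4 = k by omega, show W + 4 * k % 4 - 2 = W - 2 by omega]
    have hA1 : a1 = z2b (aSt W (circ.take k) t sA (W + 1 - 2)) := by
      rw [ha1]
      show z2b (aSt W (circ.take ((t ++ [a0]).length / 4)) (t ++ [a0]) sA
        (W + (t ++ [a0]).length % 4 - 2)) = _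
      have hl : (t ++ [a0]).length = 4 * k + 1 := by simp [htlen]
      rw [hl]
      have h1 : (4 * k + 1) / 4 = k := by omega
      have h2 : W + (4 * k + 1) % 4 - 2 = W + 1 - 2 := by omega
      rw [h1, h2, hstab]
    have hB0 : b0 = z2b (Sk W) := by
      rw [hb0]
      show z2b (bSt W (circ.take ((t ++ [a0, a1]).length / 4)) (t ++ [a0, a1]) sB
        (W + (t ++ [a0, a1]).length % 4 - 2)) = _
      have hl : (t ++ [a0, a1]).length = 4 * k + 2 := by simp [htlen]
      rw [hl]
      have h1 : (4 * k + 2) / 4 = k := by omega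
      have h2 : W + (4 * k + 2) % 4 - 2 = W := by omega
      rw [h1, h2, hstabB, IHb W le_rfl]
    have hB1 : b1 = z2b (Sk (W + 1)) := by
      rw [hb1]
      show z2b (bSt W (circ.take ((t ++ [a0, a1, b0]).length / 4)) (t ++ [a0, a1, b0]) sB
        (W + (t ++ [a0, a1, b0]).length % 4 - 2)) = _
      have hl : (t ++ [a0, a1, b0]).length = 4 * k + 3 := by simp [htlen]
      rw [hl]
      have h1 : (4 * k + 3) / 4 = k := by omega
      have h2 : W + (4 * k + 3) % 4 - 2 = W + 1 := by omega
      rw [h1, h2, hstabB, IHb (W + 1) (by omega)]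
    -- structure of the simulated states at stage k+1
    have htake : circ.take (k + 1) = circ.take k ++ [g] := by
      rw [hg, List.take_concat_get']
    have hdropT : (t ++ [a0, a1, b0, b1]).drop (4 * (circ.take k).length) = [a0, a1, b0, b1] := by
      rw [htakelen, ← htlen, List.drop_left]
    have hLA : aSt W (circ.take (k + 1)) (transcript P x y r (4 * (k + 1))) sA
        = applyLayer g (patchA W b0 b1 (aSt W (circ.take k) t sA)) := by
      rw [hT, htake, aSt_append, hdropT, hstab, aSt_singleton]
      rfl
    have hLB : bSt W (circ.take (k + 1)) (transcript P x y r (4 * (k + 1))) sB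
        = applyLayer g (patchB W a0 a1 (bSt W (circ.take k) t sB)) := by
      rw [hT, htake, bSt_append, hdropT, hstabB, bSt_singleton]
      rfl
    have hRHS : evalCircuit (circ.take (k + 1)) (initState n W x y r) = applyLayer g Sk := by
      rw [htake, evalCircuit_concat, hSk]
    constructor
    · -- Alice
      intro i hi
      rw [hLA, hRHS]
      refine layerA W g hgval _ _ ?_ ?_ i hi
      · intro j hj
        show patchA W b0 b1 (aSt W (circ.take k) t sA) j = Sk j
        rw [patchA, if_neg (by omega)]
        exact IHa j hj
      · intro gg hgg hstrgg j hjsup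
        have hb : gg.pos < W ∧ W ≤ gg.pos + 2 := hstrgg
        rw [mem_support_iff] at hjsup
        show patchA W b0 b1 (aSt W (circ.take k) t sA) j = Sk j
        by_cases hjW : j < W
        · rw [patchA, if_neg (by omega)]
          exact IHa j hjW
        · have hjcase : j = W ∨ j = W + 1 := by omega
          rcases hjcase with rfl | rfl
          · rw [patchA, if_pos le_rfl, if_pos rfl, hB0, b2z_z2b]
          · rw [patchA, if_pos (by omega), if_neg (by omega), if_pos rfl, hB1, b2z_z2b]
    · -- Bob
      intro i hi
      rw [hLB, hRHS]
      refine layerB W g hgval _ _ ?_ ?_ i hi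
      · intro j hj
        show patchB W a0 a1 (bSt W (circ.take k) t sB) j = Sk j
        rw [patchB, if_neg (by omega)]
        exact IHb j hj
      · intro gg hgg hstrgg j hjsup
        have hb : gg.pos < W ∧ W ≤ gg.pos + 2 := hstrgg
        rw [mem_support_iff] at hjsup
        show patchB W a0 a1 (bSt W (circ.take k) t sB) j = Sk j
        by_cases hjW : W ≤ j
        · rw [patchB, if_neg (by omega)]
          exact IHb j hjW
        · have hjcase : j + 2 = W ∨ j + 1 = W := by omega
          rcases hjcase with hc | hc
          · rw [patchB, if_pos (by omega), if_pos hc, hA0, b2z_z2b]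
            have : W - 2 = j := by omega
            rw [this]
            exact IHa j (by omega)
          · have hne : ¬ j + 2 = W := by omega
            rw [patchB, if_pos (by omega), if_neg hne, if_pos hc, hA1, b2z_z2b]
            have : W + 1 - 2 = j := by omega
            rw [this]
            exact IHa j (by omega)


/-- (1) In a 1D geometrically-local circuit of fan-in-3 gates on contiguous wires, at most one
gate per (valid) layer straddles the horizontal cut.  (2) Consequently, there is a constant
`C` such that any such circuit of depth `d`, acting on a line input of size `n` together with
shared randomness, can be simulated by a two-party randomness-assisted communication protocol
with at most `C * d` bits of communication: Alice outputs the final values of all wires on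
her side of the cut and Bob those on his side. -/
theorem oneD_local_circuit_simulation :
    (∀ (W : ℕ) (L : Layer), ValidLayer L →
        (L.filter (fun g => decide (Straddles W g))).length ≤ 1)
    ∧
    ∃ C : ℕ, ∀ (n W : ℕ) (circ : List Layer),
      (∀ L ∈ circ, ValidLayer L) → n ≤ W →
      ∃ P : Protocol, P.rounds ≤ C * circ.length ∧
        ∀ x y r : ℕ → ZMod 2,
          (∀ i < W, P.outA x r (transcript P x y r P.rounds) i
              = evalCircuit circ (initState n W x y r) i) ∧
          (∀ i, W ≤ i → P.outB y r (transcript P x y r P.rounds) i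
              = evalCircuit circ (initState n W x y r) i) := by
  refine ⟨one_straddler, 4, ?_⟩
  intro n W circ hvalid hnW
  refine ⟨theProtocol n W circ, le_rfl, ?_⟩
  intro x y r
  obtain ⟨ha, hb⟩ := main_inv n W circ hvalid hnW x y r circ.length le_rfl
  rw [List.take_length] at ha hb
  exact ⟨ha, hb⟩
end
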